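/- Let X ⊆ ℝ^m be Jordan measurable, K ⊆ X a Lebesgue null set, and G : X → ℝ^m a Lipschitz map injective on int X ∖ K. Then for any two non-overlapping Jordan measurable sets A, B ⊆ X, the images G(A) and G(B) are non-overlapping (their interiors are disjoint). -/

import Mathlib

open Set Metric MeasureTheory

/-- A set is Jordan measurable if it is bounded and its boundary is a null set. -/
def JordanMeasurable {m : ℕ} (X : Set (Fin m → ℝ)) : Prop :=
  Bornology.IsBounded X ∧ volume (frontier X) = 0

/-- A Lipschitz map on a set maps null subsets to null sets. -/
lemma lipschitz_image_null {m : ℕ} {X : Set (Fin m → ℝ)} {G : (Fin m → ℝ) → (Fin m → ℝ)}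
    {L : NNReal} (hG : LipschitzOnWith L G X) {s : Set (Fin m → ℝ)} (hsX : s ⊆ X)
    (hs : volume s = 0) : volume (G '' s) = 0 := by
  have hμ : (μH[(Fintype.card (Fin m) : ℝ)] : Measure (Fin m → ℝ)) = volume :=
    hausdorffMeasure_pi_real
  have h1 : μH[(Fintype.card (Fin m) : ℝ)] (G '' s) ≤
      (L : ENNReal) ^ (Fintype.card (Fin m) : ℝ) * μH[(Fintype.card (Fin m) : ℝ)] s :=
    (hG.mono hsX).hausdorffMeasure_image_le (by positivity)
  rw [hμ, hs, mul_zero] at h1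
  exact le_antisymm h1 (zero_le)

/-- Images of non-overlapping Jordan measurable sets under a Lipschitz map, injective off
a null set, are non-overlapping. -/
theorem images_nonoverlapping {m : ℕ} (X K : Set (Fin m → ℝ)) (hX : JordanMeasurable X)
    (hKX : K ⊆ X) (hK : volume K = 0)
    (G : (Fin m → ℝ) → (Fin m → ℝ)) (L : NNReal) (hG : LipschitzOnWith L G X)
    (hinj : Set.InjOn G (interior X \ K)) :
    ∀ A B : Set (Fin m → ℝ), JordanMeasurable A → A ⊆ X → JordanMeasurable B → B ⊆ X →
      interior A ∩ interior B = ∅ → interior (G '' A) ∩ interior (G '' B) = ∅ := by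
  intro A B hA hAX hB hBX hAB
  by_contra h
  -- the intersection is a nonempty open set, hence has positive measure
  have hne : (interior (G '' A) ∩ interior (G '' B)).Nonempty :=
    nonempty_iff_ne_empty.mpr h
  have hopen : IsOpen (interior (G '' A) ∩ interior (G '' B)) :=
    isOpen_interior.inter isOpen_interior
  have hpos : 0 < volume (interior (G '' A) ∩ interior (G '' B)) :=
    hopen.measure_pos volume hne
  -- but the intersection is contained in a null set
  set N : Set (Fin m → ℝ) := (frontier A ∩ X) ∪ (frontier B ∩ X) ∪ (frontier X ∩ X) ∪ K with hN
  have hNnull : volume (G '' N) = 0 := by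
    apply lipschitz_image_null hG
    · intro x hx
      rcases hx with ((h1 | h1) | h1) | h1
      · exact h1.2
      · exact h1.2
      · exact h1.2
      · exact hKX h1
    · refine le_antisymm ?_ (zero_le)
      calc volume N ≤ volume (frontier A ∩ X) + volume (frontier B ∩ X) +
            volume (frontier X ∩ X) + volume K := by
              exact le_trans (measure_union_le _ _) (by
                gcongr
                exact le_trans (measure_union_le _ _) (by
                  gcongr
                  exact measure_union_le _ _))
        _ ≤ volume (frontier A) + volume (frontier B) + volume (frontier X) + volume K := by
              gcongr <;> exact inter_subset_left
        _ = 0 := by rw [hA.2, hB.2, hX.2, hK]; simp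
  have hsub : interior (G '' A) ∩ interior (G '' B) ⊆ G '' N := by
    rintro y ⟨hyA, hyB⟩
    obtain ⟨a, ha, rfl⟩ := interior_subset hyA
    obtain ⟨b, hb, hab⟩ := interior_subset hyB
    by_cases haN : a ∈ N
    · exact ⟨a, haN, rfl⟩
    by_cases hbN : b ∈ N
    · exact ⟨b, hbN, hab⟩
    exfalso
    have haX : a ∈ X := hAX ha
    have hbX : b ∈ X := hBX hb
    have not_frA : a ∉ frontier A := fun h' => haN (Or.inl (Or.inl (Or.inl ⟨h', haX⟩)))
    have not_frXa : a ∉ frontier X := fun h' => haN (Or.inl (Or.inr ⟨h', haX⟩))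
    have not_Ka : a ∉ K := fun h' => haN (Or.inr h')
    have not_frB : b ∉ frontier B := fun h' => hbN (Or.inl (Or.inl (Or.inr ⟨h', hbX⟩)))
    have not_frXb : b ∉ frontier X := fun h' => hbN (Or.inl (Or.inr ⟨h', hbX⟩))
    have not_Kb : b ∉ K := fun h' => hbN (Or.inr h')
    have haiX : a ∈ interior X := by
      by_contra hc; exact not_frXa ⟨subset_closure haX, hc⟩
    have hbiX : b ∈ interior X := by
      by_contra hc; exact not_frXb ⟨subset_closure hbX, hc⟩
    have haiA : a ∈ interior A := by
      by_contra hc; exact not_frA ⟨subset_closure ha, hc⟩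
    have hbiB : b ∈ interior B := by
      by_contra hc; exact not_frB ⟨subset_closure hb, hc⟩
    have heq : a = b := hinj ⟨haiX, not_Ka⟩ ⟨hbiX, not_Kb⟩ hab.symm
    have : a ∈ interior A ∩ interior B := ⟨haiA, heq ▸ hbiB⟩
    rw [hAB] at this
    exact this
  have hzero : volume (interior (G '' A) ∩ interior (G '' B)) = 0 :=
    measure_mono_null hsub hNnull
  exact hpos.ne' hzero
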